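/- Define f : Bool³ → Bool³ by f(a,b,c) = (a ∧ (b ∨ c), a ∨ b ∨ c, b ∧ c); explicitly, f maps (0,0,0)↦(0,0,0), (0,0,1)↦(0,1,0), (0,1,0)↦(0,1,0), (0,1,1)↦(0,1,1), (1,0,0)↦(0,1,0), (1,0,1)↦(1,1,0), (1,1,0)↦(1,1,0), (1,1,1)↦(1,1,1). Then f is a contraction with unit weights: for all u, v ∈ Bool³, the Hamming distance satisfies d(u,v) ≥ d(f u, f v). Moreover f satisfies the occurrence-vector initial data for the inequality S(AB) + S(BC) + S(AC) ≥ S(AB) + S(ABC) + S(C) with coordinates (x_{AB}, x_{BC}, x_{AC}) and (y_{AB}, y_{ABC}, y_{C}): f(0,0,0) = (0,0,0) [region O], f(1,0,1) = (1,1,0) [region A], f(1,1,0) = (1,1,0) [region B], and f(0,1,1) = (0,1,1) [region C]. -/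
import Mathlib

/-- The contraction map `f(a,b,c) = (a ∧ (b ∨ c), a ∨ b ∨ c, b ∧ c)` for the inequality
`S(AB) + S(BC) + S(AC) ≥ S(AB) + S(ABC) + S(C)`, in coordinates
`(x_{AB}, x_{BC}, x_{AC})` and `(y_{AB}, y_{ABC}, y_C)`. -/
def f12 : Bool × Bool × Bool → Bool × Bool × Bool :=
  fun p => (p.1 && (p.2.1 || p.2.2), p.1 || p.2.1 || p.2.2, p.2.1 && p.2.2)

/-- Hamming distance on `Bool³`. -/
def hamming3 (u v : Bool × Bool × Bool) : ℕ :=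
  (if u.1 = v.1 then 0 else 1) + (if u.2.1 = v.2.1 then 0 else 1) +
    (if u.2.2 = v.2.2 then 0 else 1)

/-- `f12` is a contraction with unit weights, `d(u,v) ≥ d(f u, f v)` for the Hamming
distance on `Bool³`, and it satisfies the occurrence-vector initial data for the
inequality `S(AB) + S(BC) + S(AC) ≥ S(AB) + S(ABC) + S(C)`:
`f(0,0,0) = (0,0,0)` [region `O`], `f(1,0,1) = (1,1,0)` [region `A`],
`f(1,1,0) = (1,1,0)` [region `B`], and `f(0,1,1) = (0,1,1)` [region `C`]. -/
theorem f12_contraction :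
    (∀ u v : Bool × Bool × Bool, hamming3 (f12 u) (f12 v) ≤ hamming3 u v) ∧
    f12 (false, false, false) = (false, false, false) ∧
    f12 (true, false, true) = (true, true, false) ∧
    f12 (true, true, false) = (true, true, false) ∧
    f12 (false, true, true) = (false, true, true) := by
  refine ⟨?_, rfl, rfl, rfl, rfl⟩
  rintro ⟨a, b, c⟩ ⟨a', b', c'⟩
  cases a <;> cases b <;> cases c <;> cases a' <;> cases b' <;> cases c' <;> decide
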